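/- arXiv:math-ph/0302011 — 3 statements merged into one kernel-verified Lean document; each statement's English description precedes it below -/
import Mathlib

section
/- Let λ = (n₁ > ⋯ > n_k > 0) be a strict partition with double λ̃ = (n₁,…,n_k | n₁−1,…,n_k−1), and let ρ : ℤ → ℂ with r(n) = ρ(−n)ρ(n−1). Then r_λ := ∏_{i=1}^k r(1)r(2)⋯r(n_i) equals ρ^{KP}_{λ̃}(0) := ∏_{(i,j) ∈ λ̃} ρ(j−i), the product of ρ over the contents of the cells of the Young diagram of λ̃. -/
/-- The cells of the `i`-th "hook" of the Young diagram of the double `λ̃` of a strict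
partition `λ`: the diagonal node `(i,i)`, the `n_i − 1` nodes following it in its row,
and the `n_i` nodes following it in its column (so that the `i`-th diagonal hook
consists of `2 n_i` cells, as for `λ̃ = (n | n−1)` in Frobenius notation). -/
def hookCells (k : ℕ) (n : Fin k → ℕ) (i : Fin k) : Finset (ℕ × ℕ) :=
  {((i : ℕ), (i : ℕ))}
    ∪ (Finset.range (n i - 1)).image (fun m => ((i : ℕ), (i : ℕ) + m + 1))
    ∪ (Finset.range (n i)).image (fun m => ((i : ℕ) + m + 1, (i : ℕ)))

/-- The set of cells of the Young diagram of the double `λ̃`. -/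
def doubleCells (k : ℕ) (n : Fin k → ℕ) : Finset (ℕ × ℕ) :=
  Finset.univ.biUnion (hookCells k n)

lemma min_of_mem_hook {k : ℕ} {n : Fin k → ℕ} {i : Fin k} {c : ℕ × ℕ}
    (hc : c ∈ hookCells k n i) : min c.1 c.2 = (i : ℕ) := by
  simp only [hookCells, Finset.mem_union, Finset.mem_singleton, Finset.mem_image,
    Finset.mem_range] at hc
  rcases hc with (h | ⟨m, hm, h⟩) | ⟨m, hm, h⟩ <;>
    (cases h; simp <;> omega)

/-- For a strict partition `λ = (n₁ > ⋯ > n_k > 0)` and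
`r(n) = ρ(−n)ρ(n−1)`, one has `r_λ = ρ^{KP}_{λ̃}(0) = ∏_{(i,j)∈λ̃} ρ(j−i)`, the product
of `ρ` over the contents of the cells of the Young diagram of the double `λ̃`. -/
theorem r_lambda_eq_content_product_over_double (k : ℕ) (n : Fin k → ℕ)
    (hanti : StrictAnti n) (hpos : ∀ i, 0 < n i)
    (ρ r : ℤ → ℂ) (hr : ∀ m : ℤ, r m = ρ (-m) * ρ (m - 1)) :
    (∏ i : Fin k, ∏ m ∈ Finset.range (n i), r (m + 1))
      = ∏ c ∈ doubleCells k n, ρ ((c.2 : ℤ) - (c.1 : ℤ)) := by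
  rw [doubleCells, Finset.prod_biUnion]
  · apply Finset.prod_congr rfl
    intro i _
    have hN : 0 < n i := hpos i
    rw [hookCells, Finset.prod_union, Finset.prod_union, Finset.prod_image, Finset.prod_image,
      Finset.prod_singleton]
    · have h1 : ∀ m ∈ Finset.range (n i), r ((m : ℤ) + 1)
          = ρ (-((m : ℤ) + 1)) * ρ m := by
        intro m _
        rw [hr]; ring_nf
      rw [Finset.prod_congr rfl h1, Finset.prod_mul_distrib]
      have h3 : ∏ m ∈ Finset.range (n i), ρ (m : ℤ)
          = ρ 0 * ∏ m ∈ Finset.range (n i - 1), ρ ((m : ℤ) + 1) := by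
        obtain ⟨N, hNN⟩ := Nat.exists_eq_add_of_lt hN
        have : n i = N + 1 := by omega
        rw [this, Finset.prod_range_succ', Nat.add_sub_cancel]
        push_cast
        rw [mul_comm]
      rw [h3]
      simp only []
      have hrow : ∀ m ∈ Finset.range (n i - 1),
          ρ ((((i:ℕ) + m + 1 : ℕ) : ℤ) - ((i:ℕ) : ℤ)) = ρ ((m : ℤ) + 1) := by
        intro m _; congr 1; push_cast; ring
      have hcol : ∀ m ∈ Finset.range (n i),
          ρ (((i:ℕ) : ℤ) - (((i:ℕ) + m + 1 : ℕ) : ℤ)) = ρ (-((m : ℤ) + 1)) := by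
        intro m _; congr 1; push_cast; ring
      rw [Finset.prod_congr rfl hrow, Finset.prod_congr rfl hcol]
      have h0 : ((i:ℕ) : ℤ) - ((i:ℕ) : ℤ) = 0 := by ring
      rw [h0]; ring
    · intro x _ y _ h; simp only [Prod.mk.injEq] at h; omega
    · intro x _ y _ h; simp only [Prod.mk.injEq] at h; omega
    · rw [Finset.disjoint_left]
      rintro ⟨a, b⟩ h1 h2
      simp only [Finset.mem_singleton, Finset.mem_image, Finset.mem_range,
        Prod.mk.injEq] at h1 h2
      obtain ⟨m, hm, rfl, rfl⟩ := h2
      omega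
    · rw [Finset.disjoint_left]
      rintro ⟨a, b⟩ h1 h2
      simp only [Finset.mem_union, Finset.mem_singleton, Finset.mem_image, Finset.mem_range,
        Prod.mk.injEq] at h1 h2
      obtain ⟨m, hm, rfl, rfl⟩ := h2
      rcases h1 with h1 | ⟨m', _, h1, _⟩ <;> omega
  · intro i _ j _ hij
    refine Finset.disjoint_left.mpr fun c hci hcj => hij ?_
    exact Fin.ext ((min_of_mem_hook hci).symm.trans (min_of_mem_hook hcj))
end

section
/- For a strict partition λ with parts n₁ > ⋯ > n_k > 0, the shifted hook length product H*_λ = (∏_{i=1}^k n_i!) · ∏_{i<j} (n_i + n_j)/(n_i − n_j) satisfies H*_λ = 2^{−k/2} √(H_{λ̃}), where H_{λ̃} is the product of hook lengths of the double partition λ̃ = (n₁,…,n_k | n₁−1,…,n_k−1). Equivalently, (H*_λ)² · 2^k = H_{λ̃}. -/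
open Finset

namespace SHP
variable {r : ℕ}

/-- column lengths of the partition with row lengths `ν`. -/
def colLen (ν : Fin r → ℕ) (c : ℕ) : ℕ := (Finset.univ.filter fun j => c < ν j).card

/-- first-column hook lengths. -/
def hk (ν : Fin r → ℕ) (i : Fin r) : ℕ := ν i + (r - 1 - (i : ℕ))

lemma strict_gap {k : ℕ} {n : Fin k → ℕ} (hanti : StrictAnti n)
    (i j : Fin k) (hij : (i : ℕ) ≤ (j : ℕ)) : n j + (j : ℕ) ≤ n i + (i : ℕ) := by
  obtain ⟨d, hd⟩ := Nat.exists_eq_add_of_le hij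
  induction d generalizing j with
  | zero => have : i = j := Fin.ext (by omega); subst this; omega
  | succ d ih =>
    have hjd : (j : ℕ) - 1 < k := by omega
    set j' : Fin k := ⟨(j : ℕ) - 1, hjd⟩ with hj'
    have h1 : j' < j := by rw [Fin.lt_def]; simp only [hj']; omega
    have h2 := hanti h1
    have h3 := ih j' (by simp only [hj']; omega) (by simp only [hj']; omega)
    simp only [hj'] at h2 h3 ⊢
    omega
lemma colLen_anti (ν : Fin r → ℕ) : Antitone (colLen ν) := by
  intro a b hab
  apply Finset.card_le_card
  intro j hj
  simp only [Finset.mem_filter, Finset.mem_univ, true_and] at hj ⊢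
  omega

lemma colLen_le_r (ν : Fin r → ℕ) (c : ℕ) : colLen ν c ≤ r := by
  classical
  exact (Finset.card_filter_le _ _).trans (by simp)

lemma colLen_ge {ν : Fin r → ℕ} (hν : Antitone ν) {i : Fin r} {c : ℕ} (h : c < ν i) :
    (i : ℕ) + 1 ≤ colLen ν c := by
  have hsub : Finset.Iic i ⊆ Finset.univ.filter fun j => c < ν j := by
    intro j hj
    simp only [Finset.mem_Iic] at hj
    simp only [Finset.mem_filter, Finset.mem_univ, true_and]
    exact lt_of_lt_of_le h (hν hj)
  have := Finset.card_le_card hsub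
  simpa [Fin.card_Iic, colLen] using this

lemma colLen_le {ν : Fin r → ℕ} (hν : Antitone ν) {i : Fin r} {c : ℕ} (h : ν i ≤ c) :
    colLen ν c ≤ (i : ℕ) := by
  have hsub : (Finset.univ.filter fun j => c < ν j) ⊆ Finset.Iio i := by
    intro j hj
    simp only [Finset.mem_filter, Finset.mem_univ, true_and] at hj
    simp only [Finset.mem_Iio]
    by_contra hij
    push_neg at hij
    exact absurd (lt_of_lt_of_le hj (hν hij)) (not_lt.mpr h)
  have := Finset.card_le_card hsub
  simpa [Fin.card_Iio, colLen] using this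

lemma hk_anti {ν : Fin r → ℕ} (hν : Antitone ν) {a b : Fin r} (hab : a < b) :
    hk ν b < hk ν a := by
  have h1 : ν b ≤ ν a := hν hab.le
  have h2 : (a : ℕ) < b := hab
  have hb : (b : ℕ) < r := b.isLt
  unfold hk; omega

lemma row_prod (ν : Fin r → ℕ) (hν : Antitone ν) (i : Fin r) :
    (∏ c ∈ Finset.range (ν i), (ν i + colLen ν c - (i : ℕ) - c - 1)) *
      (∏ j ∈ Finset.Ioi i, (hk ν i - hk ν j)) = Nat.factorial (hk ν i) := by
  classical
  set m := hk ν i with hm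
  have hi : (i : ℕ) < r := i.isLt
  set f : ℕ → ℕ := fun c => ν i + colLen ν c - (i : ℕ) - c - 1 with hf
  set g : Fin r → ℕ := fun j => m - hk ν j with hg
  have hfmem : ∀ c ∈ Finset.range (ν i), f c ∈ Finset.Icc 1 m := by
    intro c hc
    rw [Finset.mem_range] at hc
    have h1 := colLen_ge hν hc
    have h2 := colLen_le_r ν c
    simp only [Finset.mem_Icc, hf, hm, hk]
    omega
  have hgmem : ∀ j ∈ Finset.Ioi i, g j ∈ Finset.Icc 1 m := by
    intro j hj
    rw [Finset.mem_Ioi] at hj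
    have := hk_anti hν hj
    simp only [Finset.mem_Icc, hg]
    omega
  have hfinj : ∀ c ∈ Finset.range (ν i), ∀ c' ∈ Finset.range (ν i), f c = f c' → c = c' := by
    have key : ∀ c c', c < c' → c' < ν i → f c' < f c := by
      intro c c' hlt hc'
      have h1 := colLen_ge hν (lt_trans hlt hc')
      have h2 : colLen ν c' ≤ colLen ν c := colLen_anti ν hlt.le
      have h3 := colLen_ge hν hc'
      simp only [hf]
      omega
    intro c hc c' hc' hEq
    rw [Finset.mem_range] at hc hc'
    rcases lt_trichotomy c c' with h | h | h
    · exact absurd hEq (Nat.ne_of_gt (key c c' h hc'))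
    · exact h
    · exact absurd hEq (Nat.ne_of_lt (key c' c h hc))
  have hginj : ∀ j ∈ Finset.Ioi i, ∀ j' ∈ Finset.Ioi i, g j = g j' → j = j' := by
    intro j hj j' hj' hEq
    rw [Finset.mem_Ioi] at hj hj'
    have h1 := hk_anti hν hj
    have h2 := hk_anti hν hj'
    have h3 : hk ν j = hk ν j' := by simp only [hg] at hEq; omega
    by_contra hne
    rcases lt_or_gt_of_ne hne with h | h
    · exact absurd h3 (Nat.ne_of_gt (hk_anti hν h))
    · exact absurd h3 (Nat.ne_of_lt (hk_anti hν h))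
  have hdisj : Disjoint ((Finset.range (ν i)).image f) ((Finset.Ioi i).image g) := by
    rw [Finset.disjoint_left]
    rintro a ha hb
    simp only [Finset.mem_image, Finset.mem_range, Finset.mem_Ioi] at ha hb
    obtain ⟨c, hc, hfc⟩ := ha
    obtain ⟨j, hj, hgj⟩ := hb
    have h1 := colLen_ge hν hc
    have h2 := hk_anti hν hj
    have hji : (i : ℕ) < j := hj
    have hjr : (j : ℕ) < r := j.isLt
    have hνji : ν j ≤ ν i := hν hj.le
    by_cases hcase : c < ν j
    · have h3 := colLen_ge hν hcase
      simp only [hf, hg, hm, hk] at hfc hgj h2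
      omega
    · push_neg at hcase
      have h3 := colLen_le hν hcase
      simp only [hf, hg, hm, hk] at hfc hgj h2
      omega
  have hcardf : ((Finset.range (ν i)).image f).card = ν i := by
    rw [Finset.card_image_of_injOn hfinj, Finset.card_range]
  have hcardg : ((Finset.Ioi i).image g).card = r - 1 - (i : ℕ) := by
    rw [Finset.card_image_of_injOn hginj]
    simp [Fin.card_Ioi]
  have hunion : (Finset.range (ν i)).image f ∪ (Finset.Ioi i).image g = Finset.Icc 1 m := by
    apply Finset.eq_of_subset_of_card_le
    · intro a ha
      rcases Finset.mem_union.mp ha with h | h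
      · obtain ⟨c, hc, rfl⟩ := Finset.mem_image.mp h
        exact hfmem c hc
      · obtain ⟨j, hj, rfl⟩ := Finset.mem_image.mp h
        exact hgmem j hj
    · rw [Finset.card_union_of_disjoint hdisj, hcardf, hcardg, Nat.card_Icc]
      simp only [hm, hk]
      omega
  calc (∏ c ∈ Finset.range (ν i), f c) * (∏ j ∈ Finset.Ioi i, g j)
      = (∏ a ∈ (Finset.range (ν i)).image f, a) * (∏ a ∈ (Finset.Ioi i).image g, a) := by
        rw [Finset.prod_image hfinj, Finset.prod_image hginj]
    _ = ∏ a ∈ ((Finset.range (ν i)).image f ∪ (Finset.Ioi i).image g), a :=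
        (Finset.prod_union hdisj).symm
    _ = ∏ a ∈ Finset.Icc 1 m, a := by rw [hunion]
    _ = Nat.factorial m := by
        rw [show Finset.Icc 1 m = Finset.Ico 1 (m + 1) by rw [Finset.Ico_add_one_right_eq_Icc]]
        exact Finset.prod_Ico_id_eq_factorial m

lemma partition_prod (ν : Fin r → ℕ) (hν : Antitone ν) :
    (∏ i, ∏ c ∈ Finset.range (ν i), (ν i + colLen ν c - (i : ℕ) - c - 1)) *
      (∏ i, ∏ j ∈ Finset.Ioi i, (hk ν i - hk ν j)) = ∏ i, Nat.factorial (hk ν i) := by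
  rw [← Finset.prod_mul_distrib]
  exact Finset.prod_congr rfl fun i _ => row_prod ν hν i


lemma prod_pairs {k : ℕ} {M : Type*} [CommMonoid M] (f : Fin k → Fin k → M) :
    ∏ p ∈ Finset.univ.filter (fun p : Fin k × Fin k => p.1 < p.2), f p.1 p.2 =
    ∏ i, ∏ j ∈ Finset.Ioi i, f i j := by
  rw [Finset.prod_sigma']
  exact Finset.prod_nbij' (fun p => ⟨p.1, p.2⟩) (fun s => (s.1, s.2)) (by simp) (by simp)
    (by simp) (by simp) (by simp)

lemma prod_pairs' {k : ℕ} {M : Type*} [CommMonoid M] (f : Fin k × Fin k → M) :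
    ∏ p ∈ Finset.univ.filter (fun p : Fin k × Fin k => p.1 < p.2), f p =
    ∏ i, ∏ j ∈ Finset.Ioi i, f (i, j) :=
  prod_pairs fun i j => f (i, j)

lemma sq_split {k : ℕ} (g : Fin k → Fin k → ℕ) (hsym : ∀ i j, g i j = g j i) :
    (∏ i, ∏ j, g i j) = (∏ i, g i i) * (∏ i, ∏ j ∈ Finset.Ioi i, g i j) ^ 2 := by
  classical
  have h1 : (∏ i, ∏ j, g i j) = ∏ p : Fin k × Fin k, g p.1 p.2 := by
    rw [← Finset.prod_product']
    rfl
  have h2 : (Finset.univ : Finset (Fin k × Fin k)) =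
      (Finset.univ.filter fun p : Fin k × Fin k => p.1 < p.2) ∪
      ((Finset.univ.filter fun p : Fin k × Fin k => p.2 < p.1) ∪
       (Finset.univ.filter fun p : Fin k × Fin k => p.1 = p.2)) := by
    ext p
    simp only [Finset.mem_univ, Finset.mem_union, Finset.mem_filter, true_and, true_iff]
    rcases lt_trichotomy p.1 p.2 with h | h | h
    · exact Or.inl h
    · exact Or.inr (Or.inr h)
    · exact Or.inr (Or.inl h)
  have hd1 : Disjoint (Finset.univ.filter fun p : Fin k × Fin k => p.2 < p.1)
      (Finset.univ.filter fun p : Fin k × Fin k => p.1 = p.2) := by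
    rw [Finset.disjoint_left]
    intro p hp hp'
    simp only [Finset.mem_filter] at hp hp'
    exact absurd hp'.2 (ne_of_gt hp.2)
  have hd2 : Disjoint (Finset.univ.filter fun p : Fin k × Fin k => p.1 < p.2)
      ((Finset.univ.filter fun p : Fin k × Fin k => p.2 < p.1) ∪
       (Finset.univ.filter fun p : Fin k × Fin k => p.1 = p.2)) := by
    rw [Finset.disjoint_left]
    intro p hp hp'
    simp only [Finset.mem_filter, Finset.mem_union] at hp hp'
    rcases hp' with h | h
    · exact absurd hp.2 (not_lt.mpr h.2.le)
    · exact absurd h.2 (ne_of_lt hp.2)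
  have hswap : ∏ p ∈ Finset.univ.filter (fun p : Fin k × Fin k => p.2 < p.1), g p.1 p.2 =
      ∏ p ∈ Finset.univ.filter (fun p : Fin k × Fin k => p.1 < p.2), g p.1 p.2 := by
    apply Finset.prod_nbij' (fun p => Prod.swap p) (fun p => Prod.swap p)
    · intro a ha; simp only [Finset.mem_filter, Finset.mem_univ, true_and] at ha ⊢; exact ha
    · intro a ha; simp only [Finset.mem_filter, Finset.mem_univ, true_and] at ha ⊢; exact ha
    · intro a _; simp
    · intro a _; simp
    · intro a _; simp [hsym]
  have hdiag : ∏ p ∈ Finset.univ.filter (fun p : Fin k × Fin k => p.1 = p.2), g p.1 p.2 =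
      ∏ i, g i i := by
    apply Finset.prod_nbij' (fun p => p.1) (fun i => (i, i))
    · intro a _; simp
    · intro a _; simp
    · intro a ha; simp only [Finset.mem_filter] at ha; ext <;> simp [ha.2]
    · intro a _; simp
    · intro a ha; simp only [Finset.mem_filter] at ha; rw [← ha.2]
  rw [h1]
  calc ∏ p : Fin k × Fin k, g p.1 p.2
      = ∏ p ∈ ((Finset.univ.filter fun p : Fin k × Fin k => p.1 < p.2) ∪
        ((Finset.univ.filter fun p : Fin k × Fin k => p.2 < p.1) ∪
         (Finset.univ.filter fun p : Fin k × Fin k => p.1 = p.2))), g p.1 p.2 := by rw [← h2]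
    _ = (∏ p ∈ Finset.univ.filter (fun p : Fin k × Fin k => p.1 < p.2), g p.1 p.2) *
        ((∏ p ∈ Finset.univ.filter (fun p : Fin k × Fin k => p.2 < p.1), g p.1 p.2) *
         (∏ p ∈ Finset.univ.filter (fun p : Fin k × Fin k => p.1 = p.2), g p.1 p.2)) := by
          rw [Finset.prod_union hd2, Finset.prod_union hd1]
    _ = (∏ i, g i i) * (∏ i, ∏ j ∈ Finset.Ioi i, g i j) ^ 2 := by
          rw [hswap, hdiag, prod_pairs]
          ring

end SHP


/-- Row lengths of the double `λ̃ = (n₁,…,n_k | n₁−1,…,n_k−1)` of a strict partition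
(0-indexed): `μ_i = n_i + i + 1` for `i < k`, and `μ_i = #{j : n_j + j ≥ i+1}` below
the diagonal block. -/
def muD (k : ℕ) (n : Fin k → ℕ) (i : ℕ) : ℕ :=
  if h : i < k then n ⟨i, h⟩ + i + 1
  else (Finset.univ.filter fun j : Fin k => i + 1 ≤ n j + (j : ℕ)).card

/-- Column lengths of the double: `μ'_c = n_c + c` for `c < k`,
and `μ'_c = #{j : n_j + j ≥ c}` beyond the diagonal block. -/
def muDc (k : ℕ) (n : Fin k → ℕ) (c : ℕ) : ℕ :=
  if h : c < k then n ⟨c, h⟩ + c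
  else (Finset.univ.filter fun j : Fin k => c ≤ n j + (j : ℕ)).card

/-- `H_{λ̃}`: the product of the hook lengths `μ_i + μ'_j − i − j − 1` over all cells
`(i,j)` of the Young diagram of the double `λ̃`. -/
def hookProdDouble (k : ℕ) (n : Fin k → ℕ) : ℕ :=
  ∏ i ∈ Finset.range (muDc k n 0), ∏ j ∈ Finset.range (muD k n i),
    (muD k n i + muDc k n j - i - j - 1)

/-- `H*_λ = (∏ᵢ nᵢ!) ∏_{i<j} (nᵢ+nⱼ)/(nᵢ−nⱼ)`, the product of the hook lengths of the
shifted diagram of the strict partition `λ`. -/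
noncomputable def HstarQ (k : ℕ) (n : Fin k → ℕ) : ℚ :=
  (∏ i, ((n i).factorial : ℚ)) *
    ∏ p ∈ Finset.univ.filter (fun p : Fin k × Fin k => p.1 < p.2),
      (((n p.1 : ℚ) + (n p.2 : ℚ)) / ((n p.1 : ℚ) - (n p.2 : ℚ)))

/-- For a strict partition `λ` with `k` parts,
`H*_λ = 2^{−k/2} √(H_{λ̃})`, i.e. `(H*_λ)² · 2^k = H_{λ̃}`. -/
theorem shifted_hook_product_sq (k : ℕ) (n : Fin k → ℕ)
    (hanti : StrictAnti n) (hpos : ∀ i, 0 < n i) :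
    (HstarQ k n) ^ 2 * 2 ^ k = (hookProdDouble k n : ℚ) := by
  classical
  rcases Nat.eq_zero_or_pos k with hk0 | hk0
  · subst hk0
    simp [HstarQ, hookProdDouble, muDc]
  -- basic inequalities
  have hw : ∀ i j : Fin k, (i : ℕ) ≤ (j : ℕ) → n j + (j : ℕ) ≤ n i + (i : ℕ) :=
    SHP.strict_gap hanti
  have hK : ∀ i : Fin k, k ≤ n i + (i : ℕ) := by
    intro i
    have hlast : k - 1 < k := by omega
    have h1 := hw i ⟨k - 1, hlast⟩ (by simp only; omega)
    have h2 := hpos ⟨k - 1, hlast⟩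
    simp only at h1
    omega
  set ν₁ : Fin k → ℕ := fun i => n i + (i : ℕ) + 1 - k with hν₁def
  set ν₂ : Fin k → ℕ := fun i => n i + (i : ℕ) - k with hν₂def
  have hν₁anti : Antitone ν₁ := fun a b hab => by
    simp only [hν₁def]; have := hw a b (Fin.le_def.mp hab); omega
  have hν₂anti : Antitone ν₂ := fun a b hab => by
    simp only [hν₂def]; have := hw a b (Fin.le_def.mp hab); omega
  have hhk₁ : ∀ i, SHP.hk ν₁ i = n i := by
    intro i
    have h1 := hK i; have h2 := i.isLt
    simp only [SHP.hk, hν₁def]; omega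
  have hhk₂ : ∀ i, SHP.hk ν₂ i = n i - 1 := by
    intro i
    have h1 := hK i; have h2 := i.isLt; have h3 := hpos i
    simp only [SHP.hk, hν₂def]; omega
  have hcol₁ : ∀ c : ℕ, muDc k n (k + c) = SHP.colLen ν₁ c := by
    intro c
    rw [muDc, dif_neg (by omega)]
    unfold SHP.colLen
    congr 1
    apply Finset.filter_congr
    intro j _
    simp only [hν₁def]
    omega
  have hcol₂ : ∀ t : ℕ, muD k n (k + t) = SHP.colLen ν₂ t := by
    intro t
    rw [muD, dif_neg (by omega)]
    unfold SHP.colLen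
    congr 1
    apply Finset.filter_congr
    intro j _
    simp only [hν₂def]
    omega
  set w : Fin k → ℕ := fun a => n a + (a : ℕ) with hwdef
  have hwanti : Antitone w := fun a b hab => by
    simp only [hwdef]; exact hw a b (Fin.le_def.mp hab)
  have hWmem : ∀ (i : ℕ) (a : Fin k), ((a : ℕ) < SHP.colLen w i ↔ i < w a) := by
    intro i a
    constructor
    · intro h
      by_contra hc
      push_neg at hc
      have := SHP.colLen_le hwanti hc
      omega
    · intro h
      have := SHP.colLen_ge hwanti h
      omega
  have hmuD_ge : ∀ i : ℕ, k ≤ i → muD k n i = SHP.colLen w i := by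
    intro i hi
    rw [muD, dif_neg (by omega)]
    unfold SHP.colLen
    congr 1
  have hL0 : muDc k n 0 = n ⟨0, hk0⟩ := by
    rw [muDc, dif_pos hk0]
    omega
  have hkL : k ≤ muDc k n 0 := by
    rw [hL0]
    have := hK ⟨0, hk0⟩
    simp only at this
    omega
  -- the decomposition
  have hdecomp : hookProdDouble k n =
      ((∏ i, ∏ j, (n i + n j)) *
       (∏ i, ∏ c ∈ Finset.range (ν₁ i), (ν₁ i + SHP.colLen ν₁ c - (i : ℕ) - c - 1))) *
       (∏ j, ∏ t ∈ Finset.range (ν₂ j), (ν₂ j + SHP.colLen ν₂ t - (j : ℕ) - t - 1)) := by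
    unfold hookProdDouble
    rw [Finset.range_eq_Ico, ← Finset.prod_Ico_consecutive _ (Nat.zero_le k) hkL]
    congr 1
    · -- rows 0..k-1
      rw [← Finset.range_eq_Ico, ← Fin.prod_univ_eq_prod_range, ← Finset.prod_mul_distrib]
      apply Finset.prod_congr rfl
      intro i _
      have hmuDi : muD k n (i : ℕ) = n i + (i : ℕ) + 1 := by
        rw [muD, dif_pos i.isLt]
      rw [hmuDi, Finset.range_eq_Ico,
        ← Finset.prod_Ico_consecutive _ (Nat.zero_le k) (by have := hK i; omega)]
      congr 1
      · rw [← Finset.range_eq_Ico, ← Fin.prod_univ_eq_prod_range]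
        apply Finset.prod_congr rfl
        intro j _
        rw [muDc, dif_pos j.isLt]
        simp only [Fin.eta]
        omega
      · rw [Finset.prod_Ico_eq_prod_range]
        apply Finset.prod_congr (by simp only [hν₁def, Finset.range_eq_Ico])
        intro c hc
        rw [hcol₁ c]
        simp only [hν₁def]
        have := hK i
        omega
    · -- rows k..L-1, transpose
      rw [Finset.prod_comm' (t' := Finset.range k) (s' := fun j => Finset.Ico k (muDc k n j)) ?_]
      · rw [← Fin.prod_univ_eq_prod_range]
        apply Finset.prod_congr rfl
        intro j _
        have hmuDcj : muDc k n (j : ℕ) = n j + (j : ℕ) := by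
          rw [muDc, dif_pos j.isLt]
        rw [hmuDcj, Finset.prod_Ico_eq_prod_range]
        apply Finset.prod_congr (by simp only [hν₂def, Finset.range_eq_Ico])
        intro t ht
        rw [hcol₂ t]
        simp only [hν₂def]
        have := hK j
        omega
      · intro i j
        simp only [Finset.mem_Ico, Finset.mem_range]
        constructor
        · rintro ⟨⟨hki, hiL⟩, hj⟩
          rw [hmuD_ge i hki] at hj
          have hjk : j < k := lt_of_lt_of_le hj (SHP.colLen_le_r w i)
          have hwj := (hWmem i ⟨j, hjk⟩).mp hj
          simp only [hwdef] at hwj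
          have hmuDcj : muDc k n j = n ⟨j, hjk⟩ + j := by rw [muDc, dif_pos hjk]
          exact ⟨⟨hki, by omega⟩, hjk⟩
        · rintro ⟨⟨hki, hij⟩, hjk⟩
          have hmuDcj : muDc k n j = n ⟨j, hjk⟩ + j := by rw [muDc, dif_pos hjk]
          rw [hmuDcj] at hij
          have h1 : i < w ⟨j, hjk⟩ := by simp only [hwdef]; omega
          have h2 := (hWmem i ⟨j, hjk⟩).mpr h1
          have h3 := hw ⟨0, hk0⟩ ⟨j, hjk⟩ (by simp only; omega)
          simp only at h3
          refine ⟨⟨hki, by rw [hL0]; omega⟩, ?_⟩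
          rw [hmuD_ge i hki]
          exact h2
  have hP1 := SHP.partition_prod ν₁ hν₁anti
  have hP2 := SHP.partition_prod ν₂ hν₂anti
  have e1 : (∏ i, ∏ j ∈ Finset.Ioi i, (SHP.hk ν₁ i - SHP.hk ν₁ j))
      = ∏ i, ∏ j ∈ Finset.Ioi i, (n i - n j) :=
    Finset.prod_congr rfl fun i _ => Finset.prod_congr rfl fun j _ => by rw [hhk₁, hhk₁]
  have e2 : (∏ i, ∏ j ∈ Finset.Ioi i, (SHP.hk ν₂ i - SHP.hk ν₂ j))
      = ∏ i, ∏ j ∈ Finset.Ioi i, (n i - n j) :=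
    Finset.prod_congr rfl fun i _ => Finset.prod_congr rfl fun j _ => by
      rw [hhk₂, hhk₂]; have := hpos i; have := hpos j; omega
  have e3 : (∏ i, Nat.factorial (SHP.hk ν₁ i)) = ∏ i, Nat.factorial (n i) :=
    Finset.prod_congr rfl fun i _ => by rw [hhk₁]
  have e4 : (∏ i, Nat.factorial (SHP.hk ν₂ i)) = ∏ i, Nat.factorial (n i - 1) :=
    Finset.prod_congr rfl fun i _ => by rw [hhk₂]
  rw [e1, e3] at hP1
  rw [e2, e4] at hP2
  have hB : (∏ i : Fin k, ∏ j : Fin k, (n i + n j)) =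
      (∏ i : Fin k, (n i + n i)) * (∏ i, ∏ j ∈ Finset.Ioi i, (n i + n j)) ^ 2 :=
    SHP.sq_split _ (fun i j => by ring)
  set R1 : ℕ := ∏ i, ∏ c ∈ Finset.range (ν₁ i),
      (ν₁ i + SHP.colLen ν₁ c - (i : ℕ) - c - 1) with hR1def
  set R2 : ℕ := ∏ j, ∏ t ∈ Finset.range (ν₂ j),
      (ν₂ j + SHP.colLen ν₂ t - (j : ℕ) - t - 1) with hR2def
  set P : ℕ := ∏ i, ∏ j ∈ Finset.Ioi i, (n i - n j) with hPdef
  set S : ℕ := ∏ i, ∏ j ∈ Finset.Ioi i, (n i + n j) with hSdef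
  set F : ℕ := ∏ i, Nat.factorial (n i) with hFdef
  set F' : ℕ := ∏ i, Nat.factorial (n i - 1) with hF'def
  set N : ℕ := ∏ i, n i with hNdef
  have hdiag2 : (∏ i : Fin k, (n i + n i)) = 2 ^ k * N := by
    calc (∏ i : Fin k, (n i + n i)) = ∏ i : Fin k, 2 * n i :=
          Finset.prod_congr rfl fun i _ => (two_mul _).symm
      _ = (∏ _i : Fin k, 2) * N := Finset.prod_mul_distrib
      _ = 2 ^ k * N := by rw [Finset.prod_const, Finset.card_univ, Fintype.card_fin]
  have hNF : N * F' = F := by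
    rw [hNdef, hF'def, hFdef, ← Finset.prod_mul_distrib]
    exact Finset.prod_congr rfl fun i _ => Nat.mul_factorial_pred (hpos i).ne'
  have hH : hookProdDouble k n * P ^ 2 = 2 ^ k * S ^ 2 * F ^ 2 := by
    calc hookProdDouble k n * P ^ 2
        = 2 ^ k * S ^ 2 * (N * ((R1 * P) * (R2 * P))) := by
          rw [hdecomp, hB, hdiag2]; ring
      _ = 2 ^ k * S ^ 2 * (F * (N * F')) := by rw [hP1, hP2]; ring
      _ = 2 ^ k * S ^ 2 * F ^ 2 := by rw [hNF]; ring
  have hP0 : 0 < P := by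
    rw [hPdef]
    apply Finset.prod_pos
    intro i _
    apply Finset.prod_pos
    intro j hj
    have := hanti (Finset.mem_Ioi.mp hj)
    omega
  have hPQ : (P : ℚ) ≠ 0 := Nat.cast_ne_zero.mpr hP0.ne'
  have hstar : HstarQ k n * (P : ℚ) = (F : ℚ) * (S : ℚ) := by
    unfold HstarQ
    rw [SHP.prod_pairs']
    rw [hPdef, hSdef, hFdef]
    push_cast
    rw [mul_assoc, ← Finset.prod_mul_distrib]
    congr 1
    apply Finset.prod_congr rfl
    intro i _
    rw [← Finset.prod_mul_distrib]
    apply Finset.prod_congr rfl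
    intro j hj
    have hij := Finset.mem_Ioi.mp hj
    have hlt : n j < n i := hanti hij
    have hne : (n i : ℚ) - (n j : ℚ) ≠ 0 := by
      rw [sub_ne_zero]
      exact_mod_cast hlt.ne'
    rw [Nat.cast_sub hlt.le, div_mul_cancel₀ _ hne]
  have hHQ : (hookProdDouble k n : ℚ) * (P : ℚ) ^ 2 = 2 ^ k * (S : ℚ) ^ 2 * (F : ℚ) ^ 2 := by
    exact_mod_cast congrArg (fun x : ℕ => (x : ℚ)) hH
  have key : HstarQ k n ^ 2 * 2 ^ k * (P : ℚ) ^ 2 = (hookProdDouble k n : ℚ) * (P : ℚ) ^ 2 := by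
    linear_combination (2 : ℚ) ^ k * (HstarQ k n * (P : ℚ) + (F : ℚ) * (S : ℚ)) * hstar - hHQ
  exact mul_right_cancel₀ (pow_ne_zero 2 hPQ) key
end

section
/- Schur's Pfaffian identity: for an even number N of variables, Pfaff( (x_i − x_j)/(x_i + x_j) )_{1≤i,j≤N} = ∏_{1≤i<j≤N} (x_i − x_j)/(x_i + x_j). -/
/-- The Pfaffian of a `2m × 2m` matrix (over a characteristic-zero field), via the
standard formula `Pf(A) = (2^m m!)⁻¹ Σ_σ sgn(σ) ∏ᵢ A_{σ(2i) σ(2i+1)}`; for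
skew-symmetric `A` it is the canonical square root of `det A`, equal to the sum over
perfect matchings. -/
noncomputable def pfaffian {K : Type*} [Field K] [CharZero K] {m : ℕ}
    (A : Matrix (Fin (2 * m)) (Fin (2 * m)) K) : K :=
  (((2 ^ m * m.factorial : ℕ) : K))⁻¹ *
    ∑ σ : Equiv.Perm (Fin (2 * m)),
      ((Equiv.Perm.sign σ : ℤ) : K) *
        ∏ i : Fin m,
          A (σ ⟨2 * (i : ℕ), by have := i.2; omega⟩)
            (σ ⟨2 * (i : ℕ) + 1, by have := i.2; omega⟩)

open Finset Equiv Polynomial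

namespace SchurAux

variable {K : Type*} [Field K]

noncomputable def fr (u v : K) : K := (u - v) / (u + v)

lemma fr_anti (u v : K) : fr u v = - fr v u := by
  unfold fr; rw [add_comm v u, ← neg_div, neg_sub]

noncomputable def PP {n : ℕ} (x : Fin n → K) : K :=
  ∏ p ∈ Finset.univ.filter (fun p : Fin n × Fin n => p.1 < p.2), fr (x p.1) (x p.2)

lemma succAbove_lt_self_iff {n : ℕ} (a : Fin (n+1)) (k : Fin n) :
    a.succAbove k < a ↔ (k : ℕ) < (a : ℕ) := by
  rw [Fin.succAbove_lt_iff_castSucc_lt, Fin.lt_def, Fin.coe_castSucc]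

lemma card_filter_lt {n : ℕ} (a : Fin (n+1)) :
    (Finset.univ.filter fun k : Fin n => (k : ℕ) < (a : ℕ)).card = (a : ℕ) := by
  have ha : (a : ℕ) ≤ n := Nat.lt_succ_iff.mp a.2
  refine Finset.card_eq_of_bijective (fun i hi => (⟨i, lt_of_lt_of_le hi ha⟩ : Fin n)) ?_ ?_ ?_
  · intro k hk
    simp only [Finset.mem_filter, Finset.mem_univ, true_and] at hk
    exact ⟨(k : ℕ), hk, by simp⟩
  · intro i hi; simp [hi]
  · intro i j hi hj h
    simpa using congrArg Fin.val h

/-- splitting the pair product along an index `a` -/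
lemma PP_succAbove {n : ℕ} (x : Fin (n+1) → K) (a : Fin (n+1)) :
    PP x = (-1)^(a:ℕ) * (∏ k : Fin n, fr (x a) (x (a.succAbove k))) * PP (x ∘ a.succAbove) := by
  classical
  have hsplit := Finset.prod_filter_mul_prod_filter_not
    (Finset.univ.filter (fun p : Fin (n+1) × Fin (n+1) => p.1 < p.2))
    (fun p => p.1 = a ∨ p.2 = a) (fun p => fr (x p.1) (x p.2))
  rw [PP, ← hsplit]
  congr 1
  · -- pairs touching a
    have h1 : ∏ p ∈ ((Finset.univ.filter (fun p : Fin (n+1) × Fin (n+1) => p.1 < p.2)).filter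
        (fun p => p.1 = a ∨ p.2 = a)), fr (x p.1) (x p.2)
        = ∏ k : Fin n, (if a.succAbove k < a then (-1 : K) else 1) * fr (x a) (x (a.succAbove k)) := by
      refine (Finset.prod_bij (fun (k : Fin n) _ =>
        if a.succAbove k < a then ((a.succAbove k, a) : Fin (n+1) × Fin (n+1)) else (a, a.succAbove k))
        ?_ ?_ ?_ ?_).symm
      · intro k _
        by_cases h : a.succAbove k < a
        · rw [if_pos h]
          simp only [Finset.mem_filter, Finset.mem_univ, true_and]
          exact ⟨h, by simp⟩
        · have h' : a < a.succAbove k :=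
            lt_of_le_of_ne (not_lt.mp h) (Ne.symm (Fin.succAbove_ne a k))
          rw [if_neg h]
          simp only [Finset.mem_filter, Finset.mem_univ, true_and]
          exact ⟨h', by simp⟩
      · intro k _ k' _ h
        by_cases h1 : a.succAbove k < a <;> by_cases h2 : a.succAbove k' < a
        · rw [if_pos h1, if_pos h2] at h
          simp only [Prod.mk.injEq] at h
          exact Fin.succAbove_right_injective h.1
        · rw [if_pos h1, if_neg h2] at h
          simp only [Prod.mk.injEq] at h
          exact absurd h.1 (Fin.succAbove_ne a k)
        · rw [if_neg h1, if_pos h2] at h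
          simp only [Prod.mk.injEq] at h
          exact absurd h.1.symm (Fin.succAbove_ne a k')
        · rw [if_neg h1, if_neg h2] at h
          simp only [Prod.mk.injEq] at h
          exact Fin.succAbove_right_injective h.2
      · intro p hp
        obtain ⟨p1, p2⟩ := p
        simp only [Finset.mem_filter, Finset.mem_univ, true_and] at hp
        obtain ⟨hlt, hp1 | hp2⟩ := hp
        · have hne : p2 ≠ a := by rw [← hp1]; exact (ne_of_gt hlt)
          obtain ⟨k, hk⟩ := Fin.exists_succAbove_eq hne
          refine ⟨k, Finset.mem_univ k, ?_⟩
          have hnl : ¬ a.succAbove k < a := by rw [hk, ← hp1]; exact not_lt.mpr hlt.le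
          rw [if_neg hnl, hk, hp1]
        · have hne : p1 ≠ a := by rw [← hp2]; exact (ne_of_lt hlt)
          obtain ⟨k, hk⟩ := Fin.exists_succAbove_eq hne
          refine ⟨k, Finset.mem_univ k, ?_⟩
          have hl : a.succAbove k < a := by rw [hk, ← hp2]; exact hlt
          rw [if_pos hl, hk, hp2]
      · intro k _
        by_cases h : a.succAbove k < a
        · rw [if_pos h, if_pos h]
          rw [fr_anti (x a) (x (a.succAbove k))]
          ring
        · rw [if_neg h, if_neg h]
          rw [one_mul]
    rw [h1, Finset.prod_mul_distrib]
    congr 1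
    rw [Finset.prod_ite, Finset.prod_const, Finset.prod_const, one_pow, mul_one]
    congr 1
    rw [← card_filter_lt a]
    congr 1
    ext k
    simp [succAbove_lt_self_iff]
  · -- pairs avoiding a
    rw [PP]
    refine (Finset.prod_bij (fun (p : Fin n × Fin n) _ =>
      ((a.succAbove p.1, a.succAbove p.2) : Fin (n+1) × Fin (n+1))) ?_ ?_ ?_ ?_).symm
    · intro p hp
      simp only [Finset.mem_filter, Finset.mem_univ, true_and] at hp ⊢
      refine ⟨Fin.succAbove_lt_succAbove_iff.mpr hp, ?_⟩
      push_neg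
      exact ⟨Fin.succAbove_ne a p.1, Fin.succAbove_ne a p.2⟩
    · intro p _ q _ h
      simp only [Prod.mk.injEq] at h
      exact Prod.ext (Fin.succAbove_right_injective h.1) (Fin.succAbove_right_injective h.2)
    · intro p hp
      simp only [Finset.mem_filter, Finset.mem_univ, true_and] at hp
      push_neg at hp
      obtain ⟨hlt, h1, h2⟩ := hp
      obtain ⟨k1, hk1⟩ := Fin.exists_succAbove_eq h1
      obtain ⟨k2, hk2⟩ := Fin.exists_succAbove_eq h2
      refine ⟨(k1, k2), ?_, ?_⟩
      · simp only [Finset.mem_filter, Finset.mem_univ, true_and]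
        rw [← Fin.succAbove_lt_succAbove_iff (p := a), hk1, hk2]; exact hlt
      · simp [hk1, hk2]
    · intro p _; rfl

noncomputable def pb {n : ℕ} (y : Fin n → K) (b : Fin n) : K :=
  ∏ j ∈ Finset.univ.erase b, (y b + y j) / (y b - y j)

lemma prod_erase_eq_succAbove {M : Type*} [CommMonoid M] {n : ℕ} (b : Fin (n+1))
    (F : Fin (n+1) → M) :
    ∏ j ∈ Finset.univ.erase b, F j = ∏ j : Fin n, F (b.succAbove j) := by
  refine (Finset.prod_bij (fun (j : Fin n) _ => b.succAbove j) ?_ ?_ ?_ ?_).symm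
  · intro j _; simp [Fin.succAbove_ne b j]
  · intro j _ k _ h; exact Fin.succAbove_right_injective h
  · intro a ha
    rcases Fin.exists_succAbove_eq (Finset.ne_of_mem_erase ha) with ⟨j, hj⟩
    exact ⟨j, Finset.mem_univ j, hj⟩
  · intro j _; rfl

-- erase lemmas for castSucc / last
section eraseLemmas
variable {M : Type*} [CommMonoid M] {n : ℕ}

lemma erase_last_eq : (Finset.univ.erase (Fin.last n)) = Finset.univ.image Fin.castSucc := by
  ext j
  rw [Finset.mem_erase, Finset.mem_image]
  constructor
  · intro h
    rcases Fin.exists_castSucc_eq.mpr h.1 with ⟨i, rfl⟩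
    exact ⟨i, Finset.mem_univ i, rfl⟩
  · rintro ⟨i, _, rfl⟩
    exact ⟨(Fin.castSucc_lt_last i).ne, Finset.mem_univ _⟩

lemma erase_castSucc_eq (k : Fin n) :
    (Finset.univ.erase (Fin.castSucc k) : Finset (Fin (n+1)))
      = insert (Fin.last n) ((Finset.univ.erase k).image Fin.castSucc) := by
  ext j
  rw [Finset.mem_erase, Finset.mem_insert, Finset.mem_image]
  constructor
  · intro h
    rcases eq_or_ne j (Fin.last n) with rfl | hj
    · exact Or.inl rfl
    · rcases Fin.exists_castSucc_eq.mpr hj with ⟨i, rfl⟩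
      refine Or.inr ⟨i, Finset.mem_erase.mpr ⟨?_, Finset.mem_univ i⟩, rfl⟩
      exact fun hik => h.1 (by rw [hik])
  · rintro (rfl | ⟨i, hi, rfl⟩)
    · exact ⟨(Fin.castSucc_lt_last k).ne', Finset.mem_univ _⟩
    · exact ⟨fun hc => (Finset.mem_erase.mp hi).1 (Fin.castSucc_injective n hc),
        Finset.mem_univ _⟩

lemma prod_erase_last (F : Fin (n+1) → M) :
    ∏ j ∈ Finset.univ.erase (Fin.last n), F j = ∏ j : Fin n, F (Fin.castSucc j) := by
  rw [erase_last_eq, Finset.prod_image]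
  intro i _ j _ h
  exact Fin.castSucc_injective n h

lemma prod_erase_castSucc (k : Fin n) (F : Fin (n+1) → M) :
    ∏ j ∈ Finset.univ.erase (Fin.castSucc k), F j
      = F (Fin.last n) * ∏ j ∈ Finset.univ.erase k, F (Fin.castSucc j) := by
  rw [erase_castSucc_eq, Finset.prod_insert, Finset.prod_image]
  · intro i _ j _ h
    exact Fin.castSucc_injective n h
  · rw [Finset.mem_image]
    rintro ⟨i, _, hi⟩
    exact (Fin.castSucc_lt_last i).ne hi

end eraseLemmas

/-- The key odd/even sum identity: for distinct `y` with nonvanishing pair sums,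
`∑ b, ∏_{j≠b} (y b + y j)/(y b - y j)` is `0` for even `n` and `1` for odd `n`. -/
lemma sum_pb (n : ℕ) (y : Fin n → K) (hy : Function.Injective y)
    (hs : ∀ i j, y i + y j ≠ 0) :
    ∑ b, pb y b = if Even n then 0 else 1 := by
  induction n with
  | zero => simp
  | succ n IH =>
    classical
    set y' : Fin n → K := y ∘ Fin.castSucc with hy'def
    set z : K := y (Fin.last n) with hzdef
    have hy' : Function.Injective y' := hy.comp (Fin.castSucc_injective n)
    have hs' : ∀ i j, y' i + y' j ≠ 0 := fun i j => hs _ _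
    have hIH := IH y' hy' hs'
    have hdiff : ∀ (i j : Fin n), i ≠ j → y' i - y' j ≠ 0 := by
      intro i j hij
      exact sub_ne_zero.mpr (fun hc => hij (hy' hc))
    have hzy : ∀ k : Fin n, y' k - z ≠ 0 := by
      intro k
      exact sub_ne_zero.mpr (fun hc => (Fin.castSucc_lt_last k).ne (hy hc))
    have hzy' : ∀ k : Fin n, z - y' k ≠ 0 := by
      intro k
      exact sub_ne_zero.mpr (fun hc => (Fin.castSucc_lt_last k).ne (hy hc.symm))
    -- polynomials
    set D : Polynomial K := ∏ j : Fin n, (Polynomial.X - Polynomial.C (y' j)) with hDdef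
    set L : Polynomial K := (∏ j : Fin n, (Polynomial.X + Polynomial.C (y' j)))
      - ∑ b : Fin n, Polynomial.C (pb y' b) *
          ((Polynomial.X + Polynomial.C (y' b)) *
            ∏ j ∈ Finset.univ.erase b, (Polynomial.X - Polynomial.C (y' j))) with hLdef
    set c : K := if Even (n+1) then 0 else 1 with hcdef
    set R : Polynomial K := Polynomial.C c * D with hRdef
    have hDmonic : D.Monic := Polynomial.monic_prod_of_monic _ _
      (fun j _ => Polynomial.monic_X_sub_C (y' j))
    have hDdeg : D.natDegree = n := by
      rw [hDdef, Polynomial.natDegree_prod_of_monic _ _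
        (fun j _ => Polynomial.monic_X_sub_C (y' j))]
      simp
    have hPmonic : (∏ j : Fin n, (Polynomial.X + Polynomial.C (y' j))).Monic :=
      Polynomial.monic_prod_of_monic _ _ (fun j _ => Polynomial.monic_X_add_C (y' j))
    have hPdeg : (∏ j : Fin n, (Polynomial.X + Polynomial.C (y' j))).natDegree = n := by
      rw [Polynomial.natDegree_prod_of_monic _ _
        (fun j _ => Polynomial.monic_X_add_C (y' j))]
      simp
    have hTmonic : ∀ b : Fin n,
        ((Polynomial.X + Polynomial.C (y' b)) *
          ∏ j ∈ Finset.univ.erase b, (Polynomial.X - Polynomial.C (y' j))).Monic :=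
      fun b => (Polynomial.monic_X_add_C (y' b)).mul
        (Polynomial.monic_prod_of_monic _ _ (fun j _ => Polynomial.monic_X_sub_C (y' j)))
    have hTdeg : ∀ b : Fin n,
        ((Polynomial.X + Polynomial.C (y' b)) *
          ∏ j ∈ Finset.univ.erase b, (Polynomial.X - Polynomial.C (y' j))).natDegree = n := by
      intro b
      rw [(Polynomial.monic_X_add_C (y' b)).natDegree_mul
        (Polynomial.monic_prod_of_monic _ _ (fun j _ => Polynomial.monic_X_sub_C (y' j)))]
      rw [Polynomial.natDegree_prod_of_monic _ _
        (fun j _ => Polynomial.monic_X_sub_C (y' j))]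
      simp only [Polynomial.natDegree_X_add_C, Polynomial.natDegree_X_sub_C]
      rw [Finset.sum_const, Finset.card_erase_of_mem (Finset.mem_univ b)]
      have := b.pos
      simp only [Finset.card_univ, Fintype.card_fin, smul_eq_mul, mul_one]
      omega
    have hLR : L = R := by
      set G : Polynomial K := L - R with hGdef
      have hGdeg : G.natDegree ≤ n := by
        refine le_trans (Polynomial.natDegree_sub_le _ _) (max_le ?_ ?_)
        · refine le_trans (Polynomial.natDegree_sub_le _ _) (max_le (le_of_eq hPdeg) ?_)
          refine Polynomial.natDegree_sum_le_of_forall_le _ _ (fun b _ => ?_)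
          refine le_trans (Polynomial.natDegree_mul_le) ?_
          simp [Polynomial.natDegree_C, hTdeg b]
        · refine le_trans (Polynomial.natDegree_mul_le) ?_
          simp [Polynomial.natDegree_C, hDdeg]
      have hGcoeff : G.coeff n = 0 := by
        have hLcoeff : L.coeff n = 1 - ∑ b : Fin n, pb y' b := by
          rw [hLdef, Polynomial.coeff_sub, Polynomial.finset_sum_coeff]
          congr 1
          · have := hPmonic.coeff_natDegree
            rw [hPdeg] at this
            exact this
          · refine Finset.sum_congr rfl (fun b _ => ?_)
            rw [Polynomial.coeff_C_mul]
            have := (hTmonic b).coeff_natDegree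
            rw [hTdeg b] at this
            rw [this, mul_one]
        have hRcoeff : R.coeff n = c := by
          rw [hRdef, Polynomial.coeff_C_mul]
          have := hDmonic.coeff_natDegree
          rw [hDdeg] at this
          rw [this, mul_one]
        rw [hGdef, Polynomial.coeff_sub, hLcoeff, hRcoeff, hIH, hcdef]
        rcases Nat.even_or_odd n with h | h
        · simp [h, Nat.even_add_one]
        · have h' : ¬ Even n := Nat.not_even_iff_odd.mpr h
          simp [h', Nat.even_add_one]
      have hG : G = 0 := by
        rcases eq_or_ne G 0 with h | h
        · exact h
        · have hlt : G.natDegree < n := by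
            rcases lt_or_eq_of_le hGdeg with h' | h'
            · exact h'
            · exfalso
              have := Polynomial.leadingCoeff_ne_zero.mpr h
              rw [Polynomial.leadingCoeff, h'] at this
              exact this hGcoeff
          refine Polynomial.eq_zero_of_natDegree_lt_card_of_eval_eq_zero G hy' ?_ ?_
          · intro k
            have hevalR : R.eval (y' k) = 0 := by
              rw [hRdef, Polynomial.eval_mul, Polynomial.eval_C, hDdef, Polynomial.eval_prod]
              rw [Finset.prod_eq_zero (Finset.mem_univ k) (by simp)]
              ring
            have hevalL : L.eval (y' k) = 0 := by
              rw [hLdef, Polynomial.eval_sub, Polynomial.eval_prod, Polynomial.eval_finset_sum]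
              have hsum : ∑ b : Fin n, (Polynomial.C (pb y' b) *
                  ((Polynomial.X + Polynomial.C (y' b)) *
                    ∏ j ∈ Finset.univ.erase b,
                      (Polynomial.X - Polynomial.C (y' j)))).eval (y' k)
                  = pb y' k * ((y' k + y' k) * ∏ j ∈ Finset.univ.erase k, (y' k - y' j)) := by
                rw [Finset.sum_eq_single k]
                · simp [Polynomial.eval_prod]
                · intro b _ hbk
                  simp only [Polynomial.eval_mul, Polynomial.eval_C, Polynomial.eval_add,
                    Polynomial.eval_X, Polynomial.eval_prod, Polynomial.eval_sub]
                  rw [Finset.prod_eq_zero (Finset.mem_erase.mpr ⟨Ne.symm hbk, Finset.mem_univ k⟩)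
                    (by ring)]
                  ring
                · intro h; exact absurd (Finset.mem_univ k) h
              rw [hsum]
              have hpbk : pb y' k * ∏ j ∈ Finset.univ.erase k, (y' k - y' j)
                  = ∏ j ∈ Finset.univ.erase k, (y' k + y' j) := by
                rw [pb, Finset.prod_div_distrib, div_mul_cancel₀]
                exact Finset.prod_ne_zero_iff.mpr
                  (fun j hj => hdiff k j (Finset.ne_of_mem_erase hj).symm)
              have hfull : ∏ j : Fin n, ((Polynomial.X + Polynomial.C (y' j)).eval (y' k))
                  = (y' k + y' k) * ∏ j ∈ Finset.univ.erase k, (y' k + y' j) := by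
                simp only [Polynomial.eval_add, Polynomial.eval_X, Polynomial.eval_C]
                exact (Finset.mul_prod_erase _ _ (Finset.mem_univ k)).symm
              rw [hfull, ← hpbk]
              ring
            rw [hGdef, Polynomial.eval_sub, hevalL, hevalR, sub_zero]
          · rw [Fintype.card_fin]
            exact hlt
      rw [hGdef, sub_eq_zero] at hG
      exact hG
    -- now evaluate at z
    have hevD : D.eval z ≠ 0 := by
      rw [hDdef, Polynomial.eval_prod]
      refine Finset.prod_ne_zero_iff.mpr (fun j _ => ?_)
      simp only [Polynomial.eval_sub, Polynomial.eval_X, Polynomial.eval_C]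
      exact hzy' j
    have hkey : (∑ b, pb y b) * D.eval z = c * D.eval z := by
      have hLz : L.eval z = (∑ b, pb y b) * D.eval z := by
        rw [Fin.sum_univ_castSucc]
        -- pb y (last) * D.eval z = ∏ (z + y' j)
        have hlast : pb y (Fin.last n) * D.eval z = ∏ j : Fin n, (z + y' j) := by
          rw [pb, prod_erase_last, hDdef, Polynomial.eval_prod]
          simp only [Polynomial.eval_sub, Polynomial.eval_X, Polynomial.eval_C]
          rw [← Finset.prod_mul_distrib]
          refine Finset.prod_congr rfl (fun j _ => ?_)
          show (z + y' j) / (z - y' j) * (z - y' j) = z + y' j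
          rw [div_mul_cancel₀ _ (hzy' j)]
        have hcs : ∀ b : Fin n, pb y (Fin.castSucc b) * D.eval z
            = - (pb y' b * ((z + y' b) * ∏ j ∈ Finset.univ.erase b, (z - y' j))) := by
          intro b
          have h1 : pb y (Fin.castSucc b) = (y' b + z) / (y' b - z) * pb y' b := by
            rw [pb, prod_erase_castSucc b, pb]
            rfl
          have h2 : D.eval z = (z - y' b) * ∏ j ∈ Finset.univ.erase b, (z - y' j) := by
            rw [hDdef, Polynomial.eval_prod]
            simp only [Polynomial.eval_sub, Polynomial.eval_X, Polynomial.eval_C]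
            exact (Finset.mul_prod_erase _ _ (Finset.mem_univ b)).symm
          rw [h1, h2]
          have h3 : (y' b + z) / (y' b - z) * (z - y' b) = -(z + y' b) := by
            field_simp [hzy b]
            ring
          field_simp [hzy b]
          ring
        have : (∑ b : Fin n, pb y (Fin.castSucc b) + pb y (Fin.last n)) * D.eval z
            = ∑ b : Fin n, (pb y (Fin.castSucc b) * D.eval z) + pb y (Fin.last n) * D.eval z := by
          rw [add_mul, Finset.sum_mul]
        rw [this, hlast]
        rw [Finset.sum_congr rfl (fun b _ => hcs b)]
        rw [hLdef, Polynomial.eval_sub, Polynomial.eval_prod, Polynomial.eval_finset_sum]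
        simp only [Polynomial.eval_mul, Polynomial.eval_C, Polynomial.eval_add,
          Polynomial.eval_X, Polynomial.eval_prod, Polynomial.eval_sub]
        rw [Finset.sum_neg_distrib]
        ring_nf
      have hRz : R.eval z = c * D.eval z := by
        rw [hRdef, Polynomial.eval_mul, Polynomial.eval_C]
      rw [← hLz, hLR, hRz]
    exact mul_right_cancel₀ hevD hkey

/-- Partial fraction identity: `∏ (z-y k)/(z+y k) = 1 - ∑ 2 y b/(z+y b) * pb y b`. -/
lemma prod_frac (n : ℕ) (y : Fin n → K) (hy : Function.Injective y)
    (hs : ∀ i j, y i + y j ≠ 0) (z : K) (hz : ∀ k, z + y k ≠ 0) :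
    ∏ k, (z - y k) / (z + y k) = 1 - ∑ b, (2 * y b / (z + y b)) * pb y b := by
  classical
  have hdiff : ∀ (i j : Fin n), i ≠ j → y i - y j ≠ 0 :=
    fun i j hij => sub_ne_zero.mpr (fun hc => hij (hy hc))
  set L : Polynomial K := ∏ k : Fin n, (Polynomial.X - Polynomial.C (y k)) with hLdef
  set R : Polynomial K := (∏ k : Fin n, (Polynomial.X + Polynomial.C (y k)))
    - ∑ b : Fin n, Polynomial.C (2 * y b * pb y b) *
        ∏ j ∈ Finset.univ.erase b, (Polynomial.X + Polynomial.C (y j)) with hRdef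
  have hLR : L = R := by
    set G : Polynomial K := L - R with hGdef
    have hLdeg : L.natDegree = n := by
      rw [hLdef, Polynomial.natDegree_prod_of_monic _ _
        (fun j _ => Polynomial.monic_X_sub_C (y j))]
      simp
    have hPdeg : (∏ k : Fin n, (Polynomial.X + Polynomial.C (y k))).natDegree = n := by
      rw [Polynomial.natDegree_prod_of_monic _ _
        (fun j _ => Polynomial.monic_X_add_C (y j))]
      simp
    have hTdeg : ∀ b : Fin n, (Polynomial.C (2 * y b * pb y b) *
        ∏ j ∈ Finset.univ.erase b, (Polynomial.X + Polynomial.C (y j))).natDegree < n := by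
      intro b
      refine lt_of_le_of_lt Polynomial.natDegree_mul_le ?_
      rw [Polynomial.natDegree_C, Polynomial.natDegree_prod_of_monic _ _
        (fun j _ => Polynomial.monic_X_add_C (y j))]
      simp only [Polynomial.natDegree_X_add_C, zero_add]
      rw [Finset.sum_const, Finset.card_erase_of_mem (Finset.mem_univ b), Finset.card_univ,
        Fintype.card_fin, smul_eq_mul, mul_one]
      exact Nat.sub_lt b.pos Nat.one_pos
    have hGdeg : G.natDegree ≤ n := by
      refine le_trans (Polynomial.natDegree_sub_le _ _) (max_le (le_of_eq hLdeg) ?_)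
      refine le_trans (Polynomial.natDegree_sub_le _ _) (max_le (le_of_eq hPdeg) ?_)
      refine Polynomial.natDegree_sum_le_of_forall_le _ _ (fun b _ => (hTdeg b).le)
    have hGcoeff : G.coeff n = 0 := by
      have hLc : L.coeff n = 1 := by
        have hm : L.Monic := hLdef ▸ Polynomial.monic_prod_of_monic Finset.univ _
          (fun j _ => Polynomial.monic_X_sub_C (y j))
        have := hm.coeff_natDegree
        rwa [hLdeg] at this
      have hRc : R.coeff n = 1 := by
        rw [hRdef, Polynomial.coeff_sub, Polynomial.finset_sum_coeff]
        have hPc : (∏ k : Fin n, (Polynomial.X + Polynomial.C (y k))).coeff n = 1 := by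
          have hm : (∏ k : Fin n, (Polynomial.X + Polynomial.C (y k))).Monic :=
            Polynomial.monic_prod_of_monic Finset.univ _
              (fun j _ => Polynomial.monic_X_add_C (y j))
          have := hm.coeff_natDegree
          rwa [hPdeg] at this
        rw [hPc]
        rw [Finset.sum_eq_zero (fun b _ => Polynomial.coeff_eq_zero_of_natDegree_lt (hTdeg b))]
        ring
      rw [hGdef, Polynomial.coeff_sub, hLc, hRc, sub_self]
    have hG : G = 0 := by
      rcases eq_or_ne G 0 with h | h
      · exact h
      · have hlt : G.natDegree < n := by
          rcases lt_or_eq_of_le hGdeg with h' | h'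
          · exact h'
          · exfalso
            have hne := Polynomial.leadingCoeff_ne_zero.mpr h
            rw [Polynomial.leadingCoeff, h'] at hne
            exact hne hGcoeff
        have hinj : Function.Injective (fun k : Fin n => - y k) :=
          fun i j hij => hy (neg_injective hij)
        refine Polynomial.eq_zero_of_natDegree_lt_card_of_eval_eq_zero G hinj ?_ ?_
        · intro k
          have hevalL : L.eval (- y k) = (-(y k + y k)) * ∏ j ∈ Finset.univ.erase k,
              (-(y k + y j)) := by
            rw [hLdef, Polynomial.eval_prod]
            simp only [Polynomial.eval_sub, Polynomial.eval_X, Polynomial.eval_C]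
            rw [← Finset.mul_prod_erase _ (fun j => - y k - y j) (Finset.mem_univ k)]
            congr 1
            · ring
            · exact Finset.prod_congr rfl (fun j _ => by ring)
          have hevalR : R.eval (- y k) = (-(y k + y k)) * ∏ j ∈ Finset.univ.erase k,
              (-(y k + y j)) := by
            rw [hRdef, Polynomial.eval_sub, Polynomial.eval_prod, Polynomial.eval_finset_sum]
            have h1 : ∏ j : Fin n, (Polynomial.X + Polynomial.C (y j)).eval (- y k) = 0 := by
              refine Finset.prod_eq_zero (Finset.mem_univ k) ?_
              simp
            have h2 : ∑ b : Fin n, (Polynomial.C (2 * y b * pb y b) *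
                ∏ j ∈ Finset.univ.erase b, (Polynomial.X + Polynomial.C (y j))).eval (- y k)
                = 2 * y k * (pb y k * ∏ j ∈ Finset.univ.erase k, (- y k + y j)) := by
              rw [Finset.sum_eq_single k]
              · simp only [Polynomial.eval_mul, Polynomial.eval_C, Polynomial.eval_prod,
                  Polynomial.eval_add, Polynomial.eval_X]
                ring
              · intro b _ hbk
                simp only [Polynomial.eval_mul, Polynomial.eval_C, Polynomial.eval_prod,
                  Polynomial.eval_add, Polynomial.eval_X]
                rw [Finset.prod_eq_zero (Finset.mem_erase.mpr ⟨Ne.symm hbk, Finset.mem_univ k⟩)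
                  (by ring)]
                ring
              · intro h'; exact absurd (Finset.mem_univ k) h'
            rw [h1, h2]
            have h3 : pb y k * ∏ j ∈ Finset.univ.erase k, (- y k + y j)
                = ∏ j ∈ Finset.univ.erase k, (-(y k + y j)) := by
              rw [pb, ← Finset.prod_mul_distrib]
              refine Finset.prod_congr rfl (fun j hj => ?_)
              have hne := hdiff k j (Finset.ne_of_mem_erase hj).symm
              field_simp
              ring
            rw [h3]
            ring
          rw [hGdef, Polynomial.eval_sub, hevalL, hevalR, sub_self]
        · rw [Fintype.card_fin]
          exact hlt
    rw [hGdef, sub_eq_zero] at hG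
    exact hG
  -- evaluate at z
  have hLz : L.eval z = ∏ k, (z - y k) := by
    rw [hLdef, Polynomial.eval_prod]; simp
  have hRz : R.eval z = ∏ k, (z + y k)
      - ∑ b, 2 * y b * pb y b * ∏ j ∈ Finset.univ.erase b, (z + y j) := by
    rw [hRdef, Polynomial.eval_sub, Polynomial.eval_prod, Polynomial.eval_finset_sum]
    simp [Polynomial.eval_prod]
  have hprodne : ∏ k, (z + y k) ≠ 0 := Finset.prod_ne_zero_iff.mpr (fun k _ => hz k)
  have heq : ∏ k, (z - y k) = ∏ k, (z + y k)
      - ∑ b, 2 * y b * pb y b * ∏ j ∈ Finset.univ.erase b, (z + y j) := by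
    rw [← hLz, ← hRz, hLR]
  have hdivterm : ∀ b : Fin n, 2 * y b * pb y b * (∏ j ∈ Finset.univ.erase b, (z + y j))
      / ∏ k, (z + y k) = 2 * y b / (z + y b) * pb y b := by
    intro b
    rw [← Finset.mul_prod_erase _ (fun k => z + y k) (Finset.mem_univ b)]
    have h1 : ∏ j ∈ Finset.univ.erase b, (z + y j) ≠ 0 :=
      Finset.prod_ne_zero_iff.mpr (fun k _ => hz k)
    rw [mul_div_mul_right _ _ h1, mul_div_right_comm]
  have := congrArg (fun t => t / ∏ k, (z + y k)) heq
  simp only at this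
  rw [sub_div, div_self hprodne, Finset.sum_div] at this
  rw [Finset.prod_div_distrib]
  rw [this]
  congr 1
  exact Finset.sum_congr rfl (fun b _ => hdivterm b)

/-- The crux rational identity, for odd `n`. -/
lemma crux {n : ℕ} (hodd : ¬ Even n) (y : Fin n → K) (hy : Function.Injective y)
    (hs : ∀ i j, y i + y j ≠ 0) (z : K) (hz : ∀ k, z + y k ≠ 0) :
    ∑ b, ((z - y b) / (z + y b)) * pb y b = ∏ k, (z - y k) / (z + y k) := by
  rw [prod_frac n y hy hs z hz]
  have : ∀ b : Fin n, ((z - y b) / (z + y b)) * pb y b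
      = pb y b - (2 * y b / (z + y b)) * pb y b := by
    intro b
    have hzb := hz b
    field_simp
    ring
  rw [Finset.sum_congr rfl (fun b _ => this b), Finset.sum_sub_distrib,
    sum_pb n y hy hs, if_neg hodd]

lemma neg_one_pow_mul_self (k : ℕ) (t : K) : (-1:K)^k * ((-1:K)^k * t) = t := by
  rw [← mul_assoc, ← mul_pow]
  norm_num

/-- Row expansion identity. -/
lemma Dprime {m : ℕ} (x : Fin (2*m+2) → K) (hs : ∀ i j, x i + x j ≠ 0)
    (hinj : Function.Injective x) (a : Fin (2*m+2)) :
    ∑ b' : Fin (2*m+1), (-1:K)^((b':ℕ)) * fr (x a) (x (a.succAbove b'))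
        * PP (x ∘ a.succAbove ∘ b'.succAbove)
      = (-1:K)^((a:ℕ)) * PP x := by
  classical
  have hodd : ¬ Even (2*m+1) := by
    simp [Nat.even_add_one, parity_simps]
  set y : Fin (2*m+1) → K := x ∘ a.succAbove with hydef
  set z : K := x a with hzdef
  have hyinj : Function.Injective y := hinj.comp Fin.succAbove_right_injective
  have hysum : ∀ i j, y i + y j ≠ 0 := fun i j => hs _ _
  have hz : ∀ k, z + y k ≠ 0 := fun k => hs _ _
  have hQ : ∀ b : Fin (2*m+1), pb y b * (∏ k : Fin (2*m), fr (y b) (y (b.succAbove k))) = 1 := by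
    intro b
    rw [pb, ← prod_erase_eq_succAbove b (fun j => fr (y b) (y j)), ← Finset.prod_mul_distrib]
    refine Finset.prod_eq_one (fun j hj => ?_)
    have h1 : y b - y j ≠ 0 :=
      sub_ne_zero.mpr (fun hc => (Finset.ne_of_mem_erase hj).symm (hyinj hc))
    have h2 : y b + y j ≠ 0 := hysum b j
    rw [fr]
    field_simp
  have hterm : ∀ b' : Fin (2*m+1), (-1:K)^((b':ℕ)) * fr (x a) (x (a.succAbove b'))
        * PP (x ∘ a.succAbove ∘ b'.succAbove)
      = ((z - y b') / (z + y b')) * pb y b' * PP y := by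
    intro b'
    have hxa : fr (x a) (x (a.succAbove b')) = (z - y b') / (z + y b') := rfl
    have hcomp : PP (x ∘ a.succAbove ∘ b'.succAbove) = PP (y ∘ b'.succAbove) := rfl
    rw [hxa, hcomp, PP_succAbove y b']
    have h1 := hQ b'
    set Q := ∏ k : Fin (2*m), fr (y b') (y (b'.succAbove k)) with hQdef
    set PPc := PP (y ∘ b'.succAbove) with hPPcdef
    set e := (-1:K)^((b':ℕ)) with hedef
    set frv := (z - y b') / (z + y b') with hfrvdef
    linear_combination (-(frv * e * PPc)) * h1
  rw [Finset.sum_congr rfl (fun b' _ => hterm b'), ← Finset.sum_mul]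
  rw [show (∑ b' : Fin (2*m+1), (z - y b') / (z + y b') * pb y b')
      = ∑ b' : Fin (2*m+1), ((z - y b') / (z + y b')) * pb y b' from rfl]
  rw [crux hodd y hyinj hysum z hz]
  have hPPx : PP x = (-1:K)^((a:ℕ)) * (∏ k, (z - y k) / (z + y k)) * PP y := by
    rw [PP_succAbove x a]
    rfl
  rw [hPPx]
  set e := (-1:K)^((a:ℕ)) with hedef
  set P := ∏ k, (z - y k) / (z + y k) with hPdef
  have hee : e * e = 1 := by rw [hedef, ← mul_pow]; norm_num
  linear_combination (-(P * PP y)) * hee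

/-- insert `a` as the value at `0`, with the rest given by `τ` composed with the
monotone embedding skipping `a`. -/
def ins {n : ℕ} (a : Fin (n+1)) (τ : Equiv.Perm (Fin n)) : Equiv.Perm (Fin (n+1)) :=
  (Fin.cycleRange a)⁻¹ * Equiv.Perm.decomposeFin.symm (0, τ)

lemma ins_zero {n : ℕ} (a : Fin (n+1)) (τ : Equiv.Perm (Fin n)) : ins a τ 0 = a := by
  rw [ins, Equiv.Perm.mul_apply, Equiv.Perm.decomposeFin_symm_apply_zero,
    Equiv.Perm.inv_def, Equiv.symm_apply_eq]
  exact (Fin.cycleRange_self a).symm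

lemma ins_succ {n : ℕ} (a : Fin (n+1)) (τ : Equiv.Perm (Fin n)) (k : Fin n) :
    ins a τ k.succ = a.succAbove (τ k) := by
  rw [ins, Equiv.Perm.mul_apply, Equiv.Perm.decomposeFin_symm_apply_succ,
    Equiv.swap_self, Equiv.refl_apply, Equiv.Perm.inv_def, Equiv.symm_apply_eq,
    Fin.cycleRange_succAbove]

lemma sign_ins {n : ℕ} (a : Fin (n+1)) (τ : Equiv.Perm (Fin n)) :
    Equiv.Perm.sign (ins a τ) = (-1)^(a:ℕ) * Equiv.Perm.sign τ := by
  rw [ins, map_mul, map_inv, Fin.sign_cycleRange, Equiv.Perm.decomposeFin.symm_sign]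
  simp [inv_pow]

lemma ins_bijective (n : ℕ) :
    Function.Bijective (fun p : Fin (n+1) × Equiv.Perm (Fin n) => ins p.1 p.2) := by
  rw [Fintype.bijective_iff_injective_and_card]
  constructor
  · rintro ⟨a, τ⟩ ⟨a', τ'⟩ h
    simp only at h
    have h0 : a = a' := by rw [← ins_zero a τ, ← ins_zero a' τ', h]
    subst h0
    have hτ : τ = τ' := by
      ext k
      have hk := Equiv.ext_iff.mp h k.succ
      rw [ins_succ, ins_succ] at hk
      have := Fin.succAbove_right_injective hk
      rw [this]
    rw [hτ]
  · simp [Fintype.card_prod, Fintype.card_perm, Nat.factorial_succ]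

def pA {m : ℕ} (i : Fin m) : Fin (2*m) := ⟨2*(i:ℕ), by have := i.2; omega⟩
def pB {m : ℕ} (i : Fin m) : Fin (2*m) := ⟨2*(i:ℕ)+1, by have := i.2; omega⟩

/-- the Pfaffian-type sum -/
noncomputable def SS (m : ℕ) (x : Fin (2*m) → K) : K :=
  ∑ σ : Equiv.Perm (Fin (2*m)), ((Equiv.Perm.sign σ : ℤ) : K) *
    ∏ i : Fin m, fr (x (σ (pA i))) (x (σ (pB i)))

lemma main_generic : ∀ (m : ℕ) (x : Fin (2*m) → K), (∀ i j, x i + x j ≠ 0) →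
    Function.Injective x → SS m x = ((2^m * Nat.factorial m : ℕ) : K) * PP x := by
  intro m
  induction m with
  | zero =>
    intro x hs hinj
    rw [SS, PP]
    have h1 : (Finset.univ.filter (fun p : Fin 0 × Fin 0 => p.1 < p.2)) = ∅ := by
      apply Finset.eq_empty_of_forall_notMem
      intro p
      exact absurd p.1.2 (by omega)
    rw [h1]
    simp
  | succ m IH =>
    intro x hs hinj
    set cm : K := ((2^m * Nat.factorial m : ℕ) : K) with hcmdef
    -- decompose the sum
    have hstep : SS (m+1) x
        = ∑ a : Fin (2*m+2), ∑ b' : Fin (2*m+1), ∑ ρ : Equiv.Perm (Fin (2*m)),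
            ((Equiv.Perm.sign (ins a (ins b' ρ)) : ℤ) : K) *
              ∏ i : Fin (m+1), fr (x (ins a (ins b' ρ) (pA i))) (x (ins a (ins b' ρ) (pB i))) := by
      calc SS (m+1) x
          = ∑ p : Fin (2*m+2) × Equiv.Perm (Fin (2*m+1)),
              ((Equiv.Perm.sign (ins p.1 p.2) : ℤ) : K) *
                ∏ i : Fin (m+1), fr (x (ins p.1 p.2 (pA i))) (x (ins p.1 p.2 (pB i))) := by
            rw [SS]
            exact (Fintype.sum_bijective _ (ins_bijective (2*m+1)) _ _ (fun p => rfl)).symm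
        _ = ∑ a : Fin (2*m+2), ∑ τ : Equiv.Perm (Fin (2*m+1)),
              ((Equiv.Perm.sign (ins a τ) : ℤ) : K) *
                ∏ i : Fin (m+1), fr (x (ins a τ (pA i))) (x (ins a τ (pB i))) :=
            Fintype.sum_prod_type _
        _ = ∑ a : Fin (2*m+2), ∑ p : Fin (2*m+1) × Equiv.Perm (Fin (2*m)),
              ((Equiv.Perm.sign (ins a (ins p.1 p.2)) : ℤ) : K) *
                ∏ i : Fin (m+1), fr (x (ins a (ins p.1 p.2) (pA i)))
                  (x (ins a (ins p.1 p.2) (pB i))) := by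
            refine Finset.sum_congr rfl (fun a _ => ?_)
            exact (Fintype.sum_bijective _ (ins_bijective (2*m)) _ _ (fun p => rfl)).symm
        _ = ∑ a : Fin (2*m+2), ∑ b' : Fin (2*m+1), ∑ ρ : Equiv.Perm (Fin (2*m)),
              ((Equiv.Perm.sign (ins a (ins b' ρ)) : ℤ) : K) *
                ∏ i : Fin (m+1), fr (x (ins a (ins b' ρ) (pA i))) (x (ins a (ins b' ρ) (pB i))) :=
            Finset.sum_congr rfl (fun a _ => Fintype.sum_prod_type _)
    rw [hstep]
    have hinner : ∀ (a : Fin (2*m+2)) (b' : Fin (2*m+1)) (ρ : Equiv.Perm (Fin (2*m))),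
        ((Equiv.Perm.sign (ins a (ins b' ρ)) : ℤ) : K) *
          ∏ i : Fin (m+1), fr (x (ins a (ins b' ρ) (pA i))) (x (ins a (ins b' ρ) (pB i)))
        = ((-1:K)^(a:ℕ) * (-1:K)^((b':ℕ)) * fr (x a) (x (a.succAbove b'))) *
          (((Equiv.Perm.sign ρ : ℤ) : K) *
            ∏ i : Fin m, fr ((x ∘ a.succAbove ∘ b'.succAbove) (ρ (pA i)))
              ((x ∘ a.succAbove ∘ b'.succAbove) (ρ (pB i)))) := by
      intro a b' ρ
      have hsgn : ((Equiv.Perm.sign (ins a (ins b' ρ)) : ℤ) : K)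
          = (-1:K)^(a:ℕ) * ((-1:K)^((b':ℕ)) * ((Equiv.Perm.sign ρ : ℤ) : K)) := by
        rw [sign_ins, sign_ins]
        push_cast [Units.val_mul, Units.val_pow_eq_pow_val]
        norm_num
      have happ0 : ins a (ins b' ρ) (pA (0 : Fin (m+1))) = a := by
        have h0 : (pA (0 : Fin (m+1))) = (0 : Fin (2*m+2)) := by
          apply Fin.ext; simp [pA]
        rw [h0, ins_zero]
      have happ1 : ins a (ins b' ρ) (pB (0 : Fin (m+1))) = a.succAbove b' := by
        have h1 : (pB (0 : Fin (m+1))) = Fin.succ (0 : Fin (2*m+1)) := by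
          apply Fin.ext; simp [pB]
        rw [h1, ins_succ, ins_zero]
      have happA : ∀ i : Fin m, ins a (ins b' ρ) (pA i.succ)
          = a.succAbove (b'.succAbove (ρ (pA i))) := by
        intro i
        have h : (pA i.succ) = Fin.succ (Fin.succ (pA i)) := by
          apply Fin.ext; simp [pA, Fin.val_succ]; omega
        rw [h, ins_succ, ins_succ]
      have happB : ∀ i : Fin m, ins a (ins b' ρ) (pB i.succ)
          = a.succAbove (b'.succAbove (ρ (pB i))) := by
        intro i
        have h : (pB i.succ) = Fin.succ (Fin.succ (pB i)) := by
          apply Fin.ext; simp [pB, Fin.val_succ]; omega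
        rw [h, ins_succ, ins_succ]
      rw [Fin.prod_univ_succ, happ0, happ1, hsgn]
      rw [Finset.prod_congr rfl (fun i (_ : i ∈ Finset.univ) => by rw [happA i, happB i])]
      rw [show (∏ i : Fin m, fr (x (a.succAbove (b'.succAbove (ρ (pA i)))))
            (x (a.succAbove (b'.succAbove (ρ (pB i))))))
          = ∏ i : Fin m, fr ((x ∘ a.succAbove ∘ b'.succAbove) (ρ (pA i)))
            ((x ∘ a.succAbove ∘ b'.succAbove) (ρ (pB i))) from rfl]
      ring
    rw [Finset.sum_congr rfl (fun a _ => Finset.sum_congr rfl (fun b' _ =>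
      Finset.sum_congr rfl (fun ρ _ => hinner a b' ρ)))]
    have hrho : ∀ (a : Fin (2*m+2)) (b' : Fin (2*m+1)),
        ∑ ρ : Equiv.Perm (Fin (2*m)),
          ((-1:K)^(a:ℕ) * (-1:K)^((b':ℕ)) * fr (x a) (x (a.succAbove b'))) *
          (((Equiv.Perm.sign ρ : ℤ) : K) *
            ∏ i : Fin m, fr ((x ∘ a.succAbove ∘ b'.succAbove) (ρ (pA i)))
              ((x ∘ a.succAbove ∘ b'.succAbove) (ρ (pB i))))
        = ((-1:K)^(a:ℕ) * (-1:K)^((b':ℕ)) * fr (x a) (x (a.succAbove b'))) *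
            (cm * PP (x ∘ a.succAbove ∘ b'.succAbove)) := by
      intro a b'
      rw [← Finset.mul_sum]
      congr 1
      have hsg : ∀ i j, (x ∘ a.succAbove ∘ b'.succAbove) i + (x ∘ a.succAbove ∘ b'.succAbove) j ≠ 0 :=
        fun i j => hs _ _
      have hig : Function.Injective (x ∘ a.succAbove ∘ b'.succAbove) :=
        hinj.comp (Fin.succAbove_right_injective.comp Fin.succAbove_right_injective)
      exact IH (x ∘ a.succAbove ∘ b'.succAbove) hsg hig
    rw [Finset.sum_congr rfl (fun a _ => Finset.sum_congr rfl (fun b' _ => hrho a b'))]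
    have hbsum : ∀ a : Fin (2*m+2),
        ∑ b' : Fin (2*m+1),
          ((-1:K)^(a:ℕ) * (-1:K)^((b':ℕ)) * fr (x a) (x (a.succAbove b'))) *
            (cm * PP (x ∘ a.succAbove ∘ b'.succAbove))
        = cm * PP x := by
      intro a
      have h1 : ∀ b' : Fin (2*m+1),
          ((-1:K)^(a:ℕ) * (-1:K)^((b':ℕ)) * fr (x a) (x (a.succAbove b'))) *
            (cm * PP (x ∘ a.succAbove ∘ b'.succAbove))
          = ((-1:K)^(a:ℕ) * cm) * ((-1:K)^((b':ℕ)) * fr (x a) (x (a.succAbove b'))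
              * PP (x ∘ a.succAbove ∘ b'.succAbove)) := by
        intro b'; ring
      rw [Finset.sum_congr rfl (fun b' _ => h1 b'), ← Finset.mul_sum]
      rw [Dprime x hs hinj a]
      have hee : (-1:K)^(a:ℕ) * (-1:K)^(a:ℕ) = 1 := by rw [← mul_pow]; norm_num
      linear_combination (cm * PP x) * hee
    rw [Finset.sum_congr rfl (fun a _ => hbsum a), Finset.sum_const, Finset.card_univ,
      Fintype.card_fin, nsmul_eq_mul]
    rw [hcmdef]
    push_cast [Nat.factorial_succ, pow_succ]
    ring

lemma pA_ne_pB {m : ℕ} (i : Fin m) : pA i ≠ pB i := by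
  intro h
  have := congrArg Fin.val h
  simp only [pA, pB] at this
  omega

lemma pA_injective {m : ℕ} : Function.Injective (pA (m := m)) := by
  intro i j h
  have := congrArg Fin.val h
  simp only [pA] at this
  exact Fin.ext (by omega)

/-- The main identity without the injectivity hypothesis, by perturbation. -/
lemma main_all [CharZero K] (m : ℕ) (x : Fin (2*m) → K) (hs : ∀ i j, x i + x j ≠ 0) :
    SS m x = ((2^m * Nat.factorial m : ℕ) : K) * PP x := by
  classical
  set w : Fin (2*m) → K := fun i => ((i : ℕ) : K) with hwdef
  have hwinj : Function.Injective w := by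
    intro i j h
    exact Fin.ext (Nat.cast_injective h)
  have hwsum : ∀ p : Fin (2*m) × Fin (2*m), w p.1 + w p.2 = 0 → x p.1 + x p.2 ≠ 0 := by
    intro p _
    exact hs _ _
  -- the bad set
  have hlin : ∀ c d : K, d ≠ 0 → {t : K | c + d * t = 0}.Finite := by
    intro c d hd
    apply Set.Finite.subset (Set.finite_singleton (-c / d))
    intro t ht
    simp only [Set.mem_setOf_eq] at ht
    simp only [Set.mem_singleton_iff]
    field_simp
    linear_combination ht
  set Binj : Fin (2*m) × Fin (2*m) → Set K :=
    fun p => {t | p.1 ≠ p.2 ∧ x p.1 + w p.1 * t = x p.2 + w p.2 * t} with hBinjdef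
  set Bsum : Fin (2*m) × Fin (2*m) → Set K :=
    fun p => {t | (x p.1 + x p.2) + (w p.1 + w p.2) * t = 0} with hBsumdef
  have hBinjfin : ∀ p, (Binj p).Finite := by
    intro p
    rcases eq_or_ne p.1 p.2 with h | h
    · convert Set.finite_empty
      rw [hBinjdef]
      apply Set.eq_empty_of_forall_notMem
      intro t ht
      exact ht.1 h
    · have hd : w p.1 - w p.2 ≠ 0 := sub_ne_zero.mpr (fun hc => h (hwinj hc))
      apply Set.Finite.subset (hlin (x p.1 - x p.2) (w p.1 - w p.2) hd)
      intro t ht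
      simp only [hBinjdef, Set.mem_setOf_eq] at ht
      simp only [Set.mem_setOf_eq]
      linear_combination ht.2
  have hBsumfin : ∀ p, (Bsum p).Finite := by
    intro p
    rcases eq_or_ne (w p.1 + w p.2) 0 with h | h
    · convert Set.finite_empty
      rw [hBsumdef]
      apply Set.eq_empty_of_forall_notMem
      intro t ht
      simp only [Set.mem_setOf_eq, h, zero_mul, add_zero] at ht
      exact hwsum p h ht
    · exact hlin _ _ h
  set B : Set K := (⋃ p, Binj p) ∪ (⋃ p, Bsum p) with hBdef
  have hBfin : B.Finite :=
    (Set.finite_iUnion hBinjfin).union (Set.finite_iUnion hBsumfin)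
  have hgoodsum : ∀ t, t ∉ B → ∀ i j, (x i + w i * t) + (x j + w j * t) ≠ 0 := by
    intro t ht i j hc
    apply ht
    refine Or.inr (Set.mem_iUnion.mpr ⟨(i, j), ?_⟩)
    simp only [hBsumdef, Set.mem_setOf_eq]
    linear_combination hc
  have hgoodinj : ∀ t, t ∉ B → Function.Injective (fun i => x i + w i * t) := by
    intro t ht i j hc
    by_contra hne
    apply ht
    refine Or.inl (Set.mem_iUnion.mpr ⟨(i, j), ?_⟩)
    simp only [hBinjdef, Set.mem_setOf_eq]
    exact ⟨hne, hc⟩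
  -- polynomials
  set ξ : Fin (2*m) → Polynomial K :=
    fun i => Polynomial.C (x i) + Polynomial.C (w i) * Polynomial.X with hXidef
  have hevalξ : ∀ (i : Fin (2*m)) (t : K), (ξ i).eval t = x i + w i * t := by
    intro i t
    simp [hXidef]
  set PairsLT : Finset (Fin (2*m) × Fin (2*m)) :=
    Finset.univ.filter (fun p => p.1 < p.2) with hPLTdef
  set Dp : Polynomial K := ∏ p ∈ Finset.univ.offDiag, (ξ p.1 + ξ p.2) with hDpdef
  set Sg : Equiv.Perm (Fin (2*m)) → Finset (Fin (2*m) × Fin (2*m)) :=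
    fun σ => Finset.univ.image (fun i : Fin m => (σ (pA i), σ (pB i))) with hSgdef
  have hSsub : ∀ σ, Sg σ ⊆ Finset.univ.offDiag := by
    intro σ p hp
    rw [hSgdef] at hp
    simp only [Finset.mem_image, Finset.mem_univ, true_and] at hp
    obtain ⟨i, rfl⟩ := hp
    rw [Finset.mem_offDiag]
    exact ⟨Finset.mem_univ _, Finset.mem_univ _,
      fun hc => pA_ne_pB i (σ.injective hc)⟩
  have hSinj : ∀ σ : Equiv.Perm (Fin (2*m)), ∀ i ∈ Finset.univ, ∀ j ∈ Finset.univ,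
      (fun i : Fin m => (σ (pA i), σ (pB i))) i = (fun i : Fin m => (σ (pA i), σ (pB i))) j
        → i = j := by
    intro σ i _ j _ h
    simp only [Prod.mk.injEq] at h
    exact pA_injective (σ.injective h.1)
  set Lp : Polynomial K := ∑ σ : Equiv.Perm (Fin (2*m)),
    Polynomial.C (((Equiv.Perm.sign σ : ℤ) : K)) *
      ((∏ i : Fin m, (ξ (σ (pA i)) - ξ (σ (pB i)))) *
        ∏ p ∈ Finset.univ.offDiag \ Sg σ, (ξ p.1 + ξ p.2)) with hLpdef
  set Rp : Polynomial K := Polynomial.C (((2^m * Nat.factorial m : ℕ) : K)) *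
    ((∏ p ∈ PairsLT, (ξ p.1 - ξ p.2)) * ∏ p ∈ PairsLT, (ξ p.1 + ξ p.2)) with hRpdef
  -- Claim A
  have hA : ∀ t : K, (∀ i j, (x i + w i * t) + (x j + w j * t) ≠ 0) →
      Lp.eval t = SS m (fun i => x i + w i * t) * Dp.eval t := by
    intro t hst
    rw [hLpdef, Polynomial.eval_finset_sum, SS, Finset.sum_mul]
    refine Finset.sum_congr rfl (fun σ _ => ?_)
    simp only [Polynomial.eval_mul, Polynomial.eval_C, Polynomial.eval_prod,
      Polynomial.eval_sub, Polynomial.eval_add, hevalξ]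
    rw [mul_assoc]
    congr 1
    have hDsplit : Dp.eval t = (∏ p ∈ Sg σ, ((x p.1 + w p.1 * t) + (x p.2 + w p.2 * t))) *
        ∏ p ∈ Finset.univ.offDiag \ Sg σ, ((x p.1 + w p.1 * t) + (x p.2 + w p.2 * t)) := by
      rw [hDpdef, Polynomial.eval_prod, ← Finset.prod_sdiff (hSsub σ)]
      simp only [Polynomial.eval_add, hevalξ]
      ring
    rw [hDsplit, Finset.prod_image (hSinj σ)]
    rw [← mul_assoc, ← Finset.prod_mul_distrib]
    congr 1
    refine Finset.prod_congr rfl (fun i _ => ?_)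
    rw [fr, div_mul_cancel₀]
    exact hst _ _
  -- Claim B
  have hGTLT : (Finset.univ.offDiag : Finset (Fin (2*m) × Fin (2*m))).filter (fun p => p.1 < p.2)
      = PairsLT := by
    rw [hPLTdef]
    ext p
    simp only [Finset.mem_filter, Finset.mem_offDiag, Finset.mem_univ, true_and]
    constructor
    · intro h; exact h.2
    · intro h; exact ⟨h.ne, h⟩
  have hGT : (Finset.univ.offDiag : Finset (Fin (2*m) × Fin (2*m))).filter (fun p => ¬ p.1 < p.2)
      = Finset.univ.filter (fun p : Fin (2*m) × Fin (2*m) => p.2 < p.1) := by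
    ext p
    simp only [Finset.mem_filter, Finset.mem_offDiag, Finset.mem_univ, true_and]
    constructor
    · intro h
      exact lt_of_le_of_ne (not_lt.mp h.2) (Ne.symm h.1)
    · intro h
      exact ⟨h.ne', not_lt.mpr h.le⟩
  have hB : ∀ t : K, (∀ i j, (x i + w i * t) + (x j + w j * t) ≠ 0) →
      Rp.eval t = (((2^m * Nat.factorial m : ℕ) : K) * PP (fun i => x i + w i * t)) * Dp.eval t := by
    intro t hst
    have hDsq : Dp.eval t = (∏ p ∈ PairsLT, ((x p.1 + w p.1 * t) + (x p.2 + w p.2 * t)))^2 := by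
      rw [hDpdef, Polynomial.eval_prod, ← Finset.prod_filter_mul_prod_filter_not
        Finset.univ.offDiag (fun p => p.1 < p.2), hGTLT, hGT, sq]
      congr 1
      · simp only [Polynomial.eval_add, hevalξ]
      · rw [show (∏ p ∈ Finset.univ.filter (fun p : Fin (2*m) × Fin (2*m) => p.2 < p.1),
            (ξ p.1 + ξ p.2).eval t)
            = ∏ p ∈ Finset.univ.filter (fun p : Fin (2*m) × Fin (2*m) => p.2 < p.1),
              ((x p.1 + w p.1 * t) + (x p.2 + w p.2 * t)) from
          Finset.prod_congr rfl (fun p _ => by simp only [Polynomial.eval_add, hevalξ])]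
        refine Finset.prod_bij (fun (p : Fin (2*m) × Fin (2*m)) _ => (p.2, p.1)) ?_ ?_ ?_ ?_
        · intro p hp
          simp only [Finset.mem_filter, Finset.mem_univ, true_and] at hp
          simp only [hPLTdef, Finset.mem_filter, Finset.mem_univ, true_and]
          exact hp
        · intro p _ q _ h
          simp only [Prod.mk.injEq] at h
          exact Prod.ext h.2 h.1
        · intro p hp
          simp only [hPLTdef, Finset.mem_filter, Finset.mem_univ, true_and] at hp
          refine ⟨(p.2, p.1), ?_, rfl⟩
          simp only [Finset.mem_filter, Finset.mem_univ, true_and]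
          exact hp
        · intro p _
          ring
    rw [hRpdef, Polynomial.eval_mul, Polynomial.eval_C, Polynomial.eval_mul,
      Polynomial.eval_prod, Polynomial.eval_prod, hDsq, PP]
    simp only [Polynomial.eval_sub, Polynomial.eval_add, hevalξ]
    beta_reduce
    rw [← hPLTdef]
    have hFP : (∏ p ∈ PairsLT, fr (x p.1 + w p.1 * t) (x p.2 + w p.2 * t)) *
        (∏ p ∈ PairsLT, ((x p.1 + w p.1 * t) + (x p.2 + w p.2 * t)))
        = ∏ p ∈ PairsLT, ((x p.1 + w p.1 * t) - (x p.2 + w p.2 * t)) := by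
      rw [← Finset.prod_mul_distrib]
      exact Finset.prod_congr rfl (fun p _ => by rw [fr, div_mul_cancel₀]; exact hst _ _)
    linear_combination (-(((2^m * Nat.factorial m : ℕ) : K) *
      (∏ p ∈ PairsLT, ((x p.1 + w p.1 * t) + (x p.2 + w p.2 * t))))) * hFP
  -- polynomial identity
  have hLpRp : Lp = Rp := by
    rw [← sub_eq_zero]
    apply Polynomial.eq_zero_of_infinite_isRoot
    have hsub : Bᶜ ⊆ {x | (Lp - Rp).IsRoot x} := by
      intro t ht
      have ht' : t ∉ B := ht
      simp only [Set.mem_setOf_eq, Polynomial.IsRoot, Polynomial.eval_sub, sub_eq_zero]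
      have hst := hgoodsum t ht'
      have hinjt := hgoodinj t ht'
      rw [hA t hst, hB t hst]
      congr 1
      exact main_generic m _ hst hinjt
    exact (Set.Finite.infinite_compl hBfin).mono hsub
  -- evaluate at 0
  have hx0 : (fun i => x i + w i * (0:K)) = x := by
    funext i; ring
  have hst0 : ∀ i j, (x i + w i * (0:K)) + (x j + w j * (0:K)) ≠ 0 := by
    intro i j
    simpa using hs i j
  have hA0 := hA 0 hst0
  have hB0 := hB 0 hst0
  rw [hx0] at hA0 hB0
  have hD0 : Dp.eval 0 ≠ 0 := by
    rw [hDpdef, Polynomial.eval_prod]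
    refine Finset.prod_ne_zero_iff.mpr (fun p hp => ?_)
    simp only [Polynomial.eval_add, hevalξ]
    simpa using hs p.1 p.2
  have hfin : SS m x * Dp.eval 0 = (((2^m * Nat.factorial m : ℕ) : K) * PP x) * Dp.eval 0 := by
    rw [← hA0, hLpRp, hB0]
  exact mul_right_cancel₀ hD0 hfin

end SchurAux


/-- **Schur's Pfaffian identity.** For an even number `N = 2m` of
variables, `Pfaff((xᵢ−xⱼ)/(xᵢ+xⱼ)) = ∏_{i<j} (xᵢ−xⱼ)/(xᵢ+xⱼ)`. -/
theorem schur_pfaffian_identity {K : Type*} [Field K] [CharZero K] (m : ℕ)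
    (x : Fin (2 * m) → K) (hx : ∀ i j, x i + x j ≠ 0) :
    pfaffian (Matrix.of fun i j => (x i - x j) / (x i + x j))
      = ∏ p ∈ Finset.univ.filter (fun p : Fin (2 * m) × Fin (2 * m) => p.1 < p.2),
          (x p.1 - x p.2) / (x p.1 + x p.2) := by
  have h := SchurAux.main_all (K := K) m x hx
  rw [pfaffian]
  have hsum : (∑ σ : Equiv.Perm (Fin (2 * m)),
      ((Equiv.Perm.sign σ : ℤ) : K) *
        ∏ i : Fin m,
          (Matrix.of fun i j => (x i - x j) / (x i + x j))
            (σ ⟨2 * (i : ℕ), by have := i.2; omega⟩)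
            (σ ⟨2 * (i : ℕ) + 1, by have := i.2; omega⟩))
      = SchurAux.SS m x := rfl
  rw [hsum, h]
  have hc : ((2 ^ m * m.factorial : ℕ) : K) ≠ 0 :=
    Nat.cast_ne_zero.mpr (Nat.mul_ne_zero (pow_ne_zero _ two_ne_zero) m.factorial_ne_zero)
  rw [inv_mul_cancel_left₀ hc]
  rfl
end
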